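/- Let n ≥ 2, let φ : ℝⁿ ∖ {0} → ℝ be a C¹ function homogeneous of degree 0, and let m ∈ ℤ. Suppose that for every ω ∈ ℝⁿ with |ω| = 1 and every x₀ ∈ ℝⁿ with x₀ ≠ 0 and x₀·ω = 0 one has ∫_{−∞}^{∞} ∇φ(x₀ + sω)·ω ds = 2πm. Then m = 0, and φ(ω) = φ(−ω) for all unit vectors ω. -/

import Mathlib

open Real MeasureTheory RealInnerProductSpace Filter Topology

section Aux

variable {n : ℕ} {φ : EuclideanSpace ℝ (Fin n) → ℝ}

lemma aux_diffat (hφ : ContDiffOn ℝ 1 φ {0}ᶜ) {p : EuclideanSpace ℝ (Fin n)} (hp : p ≠ 0) :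
    DifferentiableAt ℝ φ p :=
  (hφ.differentiableOn one_ne_zero).differentiableAt (isOpen_compl_singleton.mem_nhds hp)

lemma aux_grad_inner (hφ : ContDiffOn ℝ 1 φ {0}ᶜ) {p : EuclideanSpace ℝ (Fin n)} (hp : p ≠ 0)
    (v : EuclideanSpace ℝ (Fin n)) : ⟪gradient φ p, v⟫ = fderiv ℝ φ p v := by
  have h := (aux_diffat hφ hp).hasGradientAt
  rw [hasGradientAt_iff_hasFDerivAt] at h
  rw [h.fderiv]; simp

lemma aux_euler (hφ : ContDiffOn ℝ 1 φ {0}ᶜ)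
    (hφhom : ∀ t : ℝ, 0 < t → ∀ x : EuclideanSpace ℝ (Fin n), x ≠ 0 → φ (t • x) = φ x)
    {p : EuclideanSpace ℝ (Fin n)} (hp : p ≠ 0) :
    fderiv ℝ φ p p = 0 := by
  have h1 : HasDerivAt (fun t : ℝ => φ (t • p)) (fderiv ℝ φ p p) 1 := by
    have hc : HasDerivAt (fun t : ℝ => t • p) p 1 := by
      simpa using (hasDerivAt_id (1 : ℝ)).smul_const p
    have hd : HasFDerivAt φ (fderiv ℝ φ p) ((fun t : ℝ => t • p) 1) := by
      simpa using (aux_diffat hφ hp).hasFDerivAt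
    exact hd.comp_hasDerivAt 1 hc
  have h2 : (fun _ : ℝ => φ p) =ᶠ[𝓝 (1 : ℝ)] fun t : ℝ => φ (t • p) := by
    filter_upwards [Ioi_mem_nhds one_pos] with t ht
    exact (hφhom t ht p hp).symm
  exact ((h1.congr_of_eventuallyEq h2).unique (hasDerivAt_const _ _))

lemma aux_scale (hφ : ContDiffOn ℝ 1 φ {0}ᶜ)
    (hφhom : ∀ t : ℝ, 0 < t → ∀ x : EuclideanSpace ℝ (Fin n), x ≠ 0 → φ (t • x) = φ x)
    {t : ℝ} (ht : 0 < t) {x : EuclideanSpace ℝ (Fin n)} (hx : x ≠ 0) :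
    fderiv ℝ φ x = t • fderiv ℝ φ (t • x) := by
  have htx : t • x ≠ 0 := smul_ne_zero ht.ne' hx
  have h1 : HasFDerivAt (fun y => φ (t • y)) (t • fderiv ℝ φ (t • x)) x := by
    have hs : HasFDerivAt (fun y : EuclideanSpace ℝ (Fin n) => t • y)
        (t • ContinuousLinearMap.id ℝ (EuclideanSpace ℝ (Fin n))) x :=
      (hasFDerivAt_id x).const_smul t
    have := ((aux_diffat hφ htx).hasFDerivAt).comp x hs
    refine this.congr_fderiv ?_
    ext y
    simp [mul_comm]
  have h2 : φ =ᶠ[𝓝 x] fun y => φ (t • y) := by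
    filter_upwards [isOpen_compl_singleton.mem_nhds hx] with y hy
    exact (hφhom t ht y hy).symm
  exact (h1.congr_of_eventuallyEq h2).fderiv

lemma aux_bound (hφ : ContDiffOn ℝ 1 φ {0}ᶜ)
    (hφhom : ∀ t : ℝ, 0 < t → ∀ x : EuclideanSpace ℝ (Fin n), x ≠ 0 → φ (t • x) = φ x) :
    ∃ C : ℝ, 0 ≤ C ∧ ∀ p : EuclideanSpace ℝ (Fin n), p ≠ 0 → ‖p‖ * ‖fderiv ℝ φ p‖ ≤ C := by
  have hcont : ContinuousOn (fun x => ‖fderiv ℝ φ x‖) ({0}ᶜ : Set (EuclideanSpace ℝ (Fin n))) :=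
    (hφ.continuousOn_fderiv_of_isOpen isOpen_compl_singleton le_rfl).norm
  have hsub : (Metric.sphere (0 : EuclideanSpace ℝ (Fin n)) 1) ⊆ {0}ᶜ := by
    intro x hx h0
    simp only [Metric.mem_sphere, dist_zero_right] at hx
    rw [Set.mem_singleton_iff.1 h0] at hx
    simp at hx
  obtain ⟨C, hC⟩ := (isCompact_sphere (0 : EuclideanSpace ℝ (Fin n)) 1).exists_bound_of_continuousOn
    (hcont.mono hsub)
  refine ⟨max C 0, le_max_right _ _, fun p hp => ?_⟩
  set u := ‖p‖⁻¹ • p with hu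
  have hpn : ‖p‖ ≠ 0 := norm_ne_zero_iff.2 hp
  have hun : ‖u‖ = 1 := norm_smul_inv_norm hp
  have hu0 : u ≠ 0 := by
    intro h; rw [h] at hun; simp at hun
  have hscale := aux_scale hφ hφhom (norm_pos_iff.2 hp) hu0
  have hpu : ‖p‖ • u = p := by
    rw [hu, smul_smul, mul_inv_cancel₀ hpn, one_smul]
  rw [hpu] at hscale
  have : ‖fderiv ℝ φ u‖ = ‖p‖ * ‖fderiv ℝ φ p‖ := by
    rw [hscale, norm_smul, Real.norm_eq_abs, abs_of_nonneg (norm_nonneg p)]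
  rw [← this]
  have := hC u (by simpa [Metric.mem_sphere, dist_zero_right] using hun)
  calc ‖fderiv ℝ φ u‖ ≤ |‖fderiv ℝ φ u‖| := le_abs_self _
    _ ≤ C := by simpa [Real.norm_eq_abs] using this
    _ ≤ max C 0 := le_max_left _ _

end Aux

/-- If all the line integrals of `∇φ ⬝ ω` (for `φ` a `C¹` function on `ℝⁿ \ {0}` homogeneous
of degree `0`) along lines `x₀ + sω` avoiding the origin equal `2πm` for a fixed integer `m`,
then `m = 0` and `φ(ω) = φ(−ω)` for all unit vectors `ω`. -/
theorem quantized_gradient_line_integrals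
    (n : ℕ) (hn : 2 ≤ n)
    (φ : EuclideanSpace ℝ (Fin n) → ℝ)
    (hφ : ContDiffOn ℝ 1 φ {0}ᶜ)
    (hφhom : ∀ t : ℝ, 0 < t → ∀ x : EuclideanSpace ℝ (Fin n), x ≠ 0 → φ (t • x) = φ x)
    (m : ℤ)
    (hint : ∀ ω x₀ : EuclideanSpace ℝ (Fin n), ‖ω‖ = 1 → x₀ ≠ 0 → ⟪x₀, ω⟫ = 0 →
      (∫ s : ℝ, ⟪gradient φ (x₀ + s • ω), ω⟫) = 2 * π * (m : ℝ)) :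
    m = 0 ∧ ∀ ω : EuclideanSpace ℝ (Fin n), ‖ω‖ = 1 → φ ω = φ (-ω) := by
  -- First: m = 0, by reversing the direction of a line.
  have hm : m = 0 := by
    have h0 : (⟨0, by omega⟩ : Fin n) ≠ ⟨1, by omega⟩ := by
      intro h; simpa using congrArg Fin.val h
    set ω₀ : EuclideanSpace ℝ (Fin n) := EuclideanSpace.single ⟨0, by omega⟩ (1 : ℝ) with hω₀
    set x₁ : EuclideanSpace ℝ (Fin n) := EuclideanSpace.single ⟨1, by omega⟩ (1 : ℝ) with hx₁
    have hω₀n : ‖ω₀‖ = 1 := by simp [hω₀, EuclideanSpace.norm_single]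
    have hx₁n : ‖x₁‖ = 1 := by simp [hx₁, EuclideanSpace.norm_single]
    have hx₁0 : x₁ ≠ 0 := by
      intro h; rw [h] at hx₁n; simp at hx₁n
    have hperp : ⟪x₁, ω₀⟫ = 0 := by
      simp [hx₁, hω₀, EuclideanSpace.inner_single_left, EuclideanSpace.single_apply, h0.symm]
    have h1 := hint ω₀ x₁ hω₀n hx₁0 hperp
    have h2 := hint (-ω₀) x₁ (by simpa using hω₀n) hx₁0 (by simp [hperp])
    have heq : (fun s : ℝ => ⟪gradient φ (x₁ + s • -ω₀), -ω₀⟫)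
        = fun s : ℝ => -⟪gradient φ (x₁ + (-s) • ω₀), ω₀⟫ := by
      funext s
      rw [inner_neg_right]
      congr 2
      rw [neg_smul, smul_neg]
    rw [heq] at h2
    rw [integral_neg] at h2
    rw [integral_neg_eq_self (fun s : ℝ => ⟪gradient φ (x₁ + s • ω₀), ω₀⟫) volume] at h2
    rw [h1] at h2
    have hπm : π * (m : ℝ) = 0 := by linarith
    rcases mul_eq_zero.1 hπm with h | h
    · exact absurd h pi_ne_zero
    · exact_mod_cast h
  subst hm
  refine ⟨rfl, fun ω hω => ?_⟩
  have hω0 : ω ≠ 0 := by intro h; rw [h] at hω; simp at hω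
  -- find a unit vector x₀ orthogonal to ω
  obtain ⟨x₀, hx₀n, hx₀ω⟩ : ∃ x₀ : EuclideanSpace ℝ (Fin n), ‖x₀‖ = 1 ∧ ⟪x₀, ω⟫ = 0 := by
    have hne : ((ℝ ∙ ω)ᗮ : Submodule ℝ (EuclideanSpace ℝ (Fin n))) ≠ ⊥ := by
      intro hbot
      have h1 : Module.finrank ℝ (ℝ ∙ ω) + Module.finrank ℝ (ℝ ∙ ω)ᗮ
          = Module.finrank ℝ (EuclideanSpace ℝ (Fin n)) :=
        Submodule.finrank_add_finrank_orthogonal _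
      rw [finrank_span_singleton hω0, hbot, finrank_bot, finrank_euclideanSpace_fin] at h1
      omega
    obtain ⟨v, hv, hv0⟩ := Submodule.exists_mem_ne_zero_of_ne_bot hne
    refine ⟨‖v‖⁻¹ • v, norm_smul_inv_norm hv0, ?_⟩
    have : ⟪ω, v⟫ = 0 := hv ω (Submodule.mem_span_singleton_self ω)
    rw [real_inner_smul_left, real_inner_comm, this, mul_zero]
  -- the line s ↦ x₀ + s • ω
  set p : ℝ → EuclideanSpace ℝ (Fin n) := fun s => x₀ + s • ω with hp
  have hpnorm : ∀ s : ℝ, ‖p s‖ ^ 2 = 1 + s ^ 2 := by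
    intro s
    show ‖x₀ + s • ω‖ ^ 2 = 1 + s ^ 2
    rw [← real_inner_self_eq_norm_sq]
    simp only [inner_add_add_self, real_inner_smul_left, real_inner_smul_right]
    rw [real_inner_self_eq_norm_sq, real_inner_self_eq_norm_sq, hx₀n, hω,
      real_inner_comm x₀ ω, hx₀ω]
    ring
  have hpone : ∀ s : ℝ, 1 ≤ ‖p s‖ := by
    intro s
    nlinarith [hpnorm s, norm_nonneg (p s), sq_nonneg s]
  have hpabs : ∀ s : ℝ, |s| ≤ ‖p s‖ := by
    intro s
    nlinarith [hpnorm s, norm_nonneg (p s), abs_nonneg s, sq_abs s]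
  have hpne : ∀ s : ℝ, p s ≠ 0 := by
    intro s h
    have := hpone s
    rw [h, norm_zero] at this
    linarith
  set g : ℝ → ℝ := fun s => fderiv ℝ φ (p s) ω with hg
  -- continuity of g
  have hpcont : Continuous p := by
    apply continuous_const.add
    exact continuous_id.smul continuous_const
  have hgcont : Continuous g := by
    have h1 : ContinuousOn (fderiv ℝ φ) ({0}ᶜ : Set (EuclideanSpace ℝ (Fin n))) :=
      hφ.continuousOn_fderiv_of_isOpen isOpen_compl_singleton le_rfl
    have h2 : Continuous fun s => fderiv ℝ φ (p s) :=
      h1.comp_continuous hpcont fun s => hpne s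
    exact (ContinuousLinearMap.apply ℝ ℝ ω).continuous.comp h2
  -- bound and integrability
  obtain ⟨C, hC0, hC⟩ := aux_bound hφ hφhom
  have hgbound : ∀ s : ℝ, |g s| ≤ 2 * C * (1 + s ^ 2)⁻¹ := by
    intro s
    have hDp := hC (p s) (hpne s)
    have hb1 : |g s| ≤ ‖fderiv ℝ φ (p s)‖ := by
      have := (fderiv ℝ φ (p s)).le_opNorm ω
      rw [hω, mul_one] at this
      simpa [Real.norm_eq_abs] using this
    have hb1' : |g s| ≤ C := by
      have h1 : ‖fderiv ℝ φ (p s)‖ ≤ ‖p s‖ * ‖fderiv ℝ φ (p s)‖ := by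
        nlinarith [hpone s, norm_nonneg (fderiv ℝ φ (p s))]
      linarith
    -- Euler: s * g s = - fderiv φ (p s) x₀
    have heuler : fderiv ℝ φ (p s) (p s) = 0 := aux_euler hφ hφhom (hpne s)
    have hsg : s * g s = -(fderiv ℝ φ (p s) x₀) := by
      have h0 : fderiv ℝ φ (p s) (x₀ + s • ω) = 0 := heuler
      rw [map_add, (fderiv ℝ φ (p s)).map_smul, smul_eq_mul] at h0
      show s * fderiv ℝ φ (p s) ω = -(fderiv ℝ φ (p s) x₀)
      linarith
    have hb2 : |s * g s| ≤ ‖fderiv ℝ φ (p s)‖ := by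
      rw [hsg, abs_neg]
      have := (fderiv ℝ φ (p s)).le_opNorm x₀
      rw [hx₀n, mul_one] at this
      simpa [Real.norm_eq_abs] using this
    have hb2' : s ^ 2 * |g s| ≤ C := by
      have h1 : |s| * |s * g s| ≤ |s| * ‖fderiv ℝ φ (p s)‖ :=
        mul_le_mul_of_nonneg_left hb2 (abs_nonneg s)
      have h2 : |s| * ‖fderiv ℝ φ (p s)‖ ≤ ‖p s‖ * ‖fderiv ℝ φ (p s)‖ :=
        mul_le_mul_of_nonneg_right (hpabs s) (norm_nonneg _)
      have h3 : s ^ 2 * |g s| = |s| * |s * g s| := by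
        rw [abs_mul, ← sq_abs]; ring
      linarith
    have hpos : (0 : ℝ) < 1 + s ^ 2 := by positivity
    have h4 : |g s| * (1 + s ^ 2) ≤ 2 * C := by nlinarith [abs_nonneg (g s)]
    calc |g s| = |g s| * (1 + s ^ 2) * (1 + s ^ 2)⁻¹ := by field_simp
      _ ≤ 2 * C * (1 + s ^ 2)⁻¹ :=
        mul_le_mul_of_nonneg_right h4 (inv_nonneg.2 hpos.le)
  have hgint : Integrable g := by
    apply Integrable.mono' ((integrable_inv_one_add_sq).const_mul (2 * C))
      hgcont.aestronglyMeasurable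
    filter_upwards with s
    simpa [Real.norm_eq_abs] using hgbound s
  -- the integral of g is 0
  have hintg : (∫ s : ℝ, g s) = 0 := by
    have h1 := hint ω x₀ hω (by intro h; rw [h] at hx₀n; simp at hx₀n) hx₀ω
    have h2 : (fun s : ℝ => ⟪gradient φ (x₀ + s • ω), ω⟫) = g := by
      funext s
      exact aux_grad_inner hφ (hpne s) ω
    rw [h2] at h1
    simpa using h1
  -- FTC
  have hderiv : ∀ t : ℝ, HasDerivAt (fun s => φ (p s)) (g t) t := by
    intro t
    have hc : HasDerivAt p ω t := by
      show HasDerivAt (fun s : ℝ => x₀ + s • ω) ω t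
      simpa using ((hasDerivAt_id t).smul_const ω).const_add x₀
    have hd : HasFDerivAt φ (fderiv ℝ φ (p t)) (p t) := (aux_diffat hφ (hpne t)).hasFDerivAt
    exact hd.comp_hasDerivAt t hc
  have hftc : ∀ T : ℝ, (∫ t in (-T)..T, g t) = φ (p T) - φ (p (-T)) := by
    intro T
    exact intervalIntegral.integral_eq_sub_of_hasDerivAt (fun t _ => hderiv t)
      hgint.intervalIntegrable
  have hlim1 : Tendsto (fun T : ℝ => ∫ t in (-T)..T, g t) atTop (𝓝 (∫ s : ℝ, g s)) :=
    intervalIntegral_tendsto_integral hgint tendsto_neg_atTop_atBot tendsto_id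
  -- limits of φ along the line
  have hlimpos : Tendsto (fun T : ℝ => φ (p T)) atTop (𝓝 (φ ω)) := by
    have l1 : Tendsto (fun T : ℝ => T⁻¹ • x₀ + ω) atTop (𝓝 ω) := by
      have h : Tendsto (fun T : ℝ => T⁻¹ • x₀) atTop (𝓝 ((0 : ℝ) • x₀)) :=
        tendsto_inv_atTop_zero.smul_const x₀
      have := h.add_const ω
      simpa using this
    have l2 : ContinuousAt φ ω := hφ.continuousOn.continuousAt (compl_singleton_mem_nhds hω0)
    have l3 : Tendsto (fun T : ℝ => φ (T⁻¹ • x₀ + ω)) atTop (𝓝 (φ ω)) := l2.tendsto.comp l1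
    apply l3.congr'
    filter_upwards [eventually_gt_atTop (0 : ℝ)] with T hT
    show φ (T⁻¹ • x₀ + ω) = φ (x₀ + T • ω)
    rw [← hφhom T⁻¹ (inv_pos.2 hT) (x₀ + T • ω) (hpne T)]
    congr 1
    rw [smul_add, smul_smul, inv_mul_cancel₀ hT.ne', one_smul]
  have hωn0 : (-ω : EuclideanSpace ℝ (Fin n)) ≠ 0 := by
    simpa using hω0
  have hlimneg : Tendsto (fun T : ℝ => φ (p (-T))) atTop (𝓝 (φ (-ω))) := by
    have l1 : Tendsto (fun T : ℝ => T⁻¹ • x₀ + -ω) atTop (𝓝 (-ω)) := by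
      have h : Tendsto (fun T : ℝ => T⁻¹ • x₀) atTop (𝓝 ((0 : ℝ) • x₀)) :=
        tendsto_inv_atTop_zero.smul_const x₀
      have := h.add_const (-ω)
      simpa using this
    have l2 : ContinuousAt φ (-ω) := hφ.continuousOn.continuousAt (compl_singleton_mem_nhds hωn0)
    have l3 : Tendsto (fun T : ℝ => φ (T⁻¹ • x₀ + -ω)) atTop (𝓝 (φ (-ω))) := l2.tendsto.comp l1
    apply l3.congr'
    filter_upwards [eventually_gt_atTop (0 : ℝ)] with T hT
    show φ (T⁻¹ • x₀ + -ω) = φ (x₀ + (-T) • ω)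
    rw [← hφhom T⁻¹ (inv_pos.2 hT) (x₀ + (-T) • ω) (hpne (-T))]
    congr 1
    rw [smul_add, smul_smul]
    rw [show T⁻¹ * -T = (-1 : ℝ) from by field_simp]
    rw [neg_smul, one_smul]
  have hlim2 : Tendsto (fun T : ℝ => ∫ t in (-T)..T, g t) atTop (𝓝 (φ ω - φ (-ω))) := by
    have := hlimpos.sub hlimneg
    apply this.congr
    intro T
    exact (hftc T).symm
  have := tendsto_nhds_unique hlim1 hlim2
  rw [hintg] at this
  linarith
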